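/- Greedy construction of separated codes: let p, b, δ, N be positive integers. If (N-1)·p·C(p,δ)·(b-1)^{p-δ} < b^p and p < δ(b-1), then there exist N functions f_1, …, f_N : {1,…,p} → {1,…,b} such that for all i ≠ j, #{k : f_i(k) = f_j(k)} < δ. -/
import Mathlib

open Finset

-- per-factor cardinality
lemma factor_card {b : ℕ} (y : Fin b) (P : Prop) [Decidable P] :
    Fintype.card {x : Fin b // x = y ↔ P} = if P then 1 else b - 1 := by
  by_cases h : P
  · simp only [h, if_true]
    rw [Fintype.card_congr (Equiv.subtypeEquivRight (q := fun x => x = y) (fun x => by simp [h]))]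
    exact Fintype.card_subtype_eq y
  · simp only [h, if_false]
    rw [Fintype.card_congr (Equiv.subtypeEquivRight (q := fun x => ¬ x = y) (fun x => by simp [h]))]
    rw [Fintype.card_subtype_compl, Fintype.card_subtype_eq, Fintype.card_fin]

lemma fiber_card {p b : ℕ} (g : Fin p → Fin b) (T : Finset (Fin p)) :
    (univ.filter (fun f : Fin p → Fin b => ∀ k, f k = g k ↔ k ∈ T)).card
      = (b - 1) ^ (p - T.card) := by
  rw [← Fintype.card_subtype]
  rw [Fintype.card_congr (Equiv.subtypePiEquivPi (p := fun k x => x = g k ↔ k ∈ T))]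
  rw [Fintype.card_pi]
  have : ∀ k : Fin p, Fintype.card {x : Fin b // x = g k ↔ k ∈ T}
      = if k ∈ T then 1 else b - 1 := fun k => factor_card (g k) _
  rw [Finset.prod_congr rfl (fun k _ => this k)]
  rw [Finset.prod_ite, Finset.prod_const_one, Finset.prod_const, one_mul]
  congr 1
  rw [Finset.filter_not, Finset.filter_mem_eq_inter, Finset.univ_inter,
    Finset.card_sdiff_of_subset (Finset.subset_univ T), Finset.card_univ, Fintype.card_fin]

lemma term_mono {p b δ : ℕ} (hratio : p < δ * (b - 1)) :
    ∀ j, δ ≤ j → j ≤ p →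
      p.choose j * (b - 1) ^ (p - j) ≤ p.choose δ * (b - 1) ^ (p - δ) := by
  intro j
  induction j with
  | zero =>
    intro h1 h2
    have : δ = 0 := by omega
    subst this; exact le_rfl
  | succ j ih =>
    intro h1 h2
    rcases Nat.lt_or_ge δ (j+1) with hlt | hge
    · have hδj : δ ≤ j := by omega
      have hjp : j ≤ p := by omega
      refine le_trans ?_ (ih hδj hjp)
      -- show choose p (j+1) * (b-1)^(p-(j+1)) ≤ choose p j * (b-1)^(p-j)
      have hkey : p.choose (j+1) ≤ p.choose j * (b - 1) := by
        have h1' : p.choose (j+1) * (j+1) = p.choose j * (p - j) :=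
          Nat.choose_succ_right_eq p j
        have h2' : p - j ≤ (j+1) * (b-1) := by
          have : δ * (b-1) ≤ (j+1) * (b-1) := Nat.mul_le_mul_right _ (by omega)
          omega
        have : p.choose (j+1) * (j+1) ≤ p.choose j * ((j+1) * (b-1)) := by
          rw [h1']; exact Nat.mul_le_mul_left _ h2'
        have h3 : p.choose j * ((j+1) * (b-1)) = p.choose j * (b-1) * (j+1) := by ring
        rw [h3] at this
        exact Nat.le_of_mul_le_mul_right this (Nat.succ_pos j)
      calc p.choose (j+1) * (b - 1) ^ (p - (j+1))
          ≤ p.choose j * (b - 1) * (b - 1) ^ (p - (j+1)) :=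
            Nat.mul_le_mul_right _ hkey
        _ = p.choose j * (b - 1) ^ (p - j) := by
            rw [mul_assoc, ← pow_succ']
            congr 2
            omega
    · have : δ = j + 1 := by omega
      subst this; exact le_rfl

lemma bad_card {p b δ : ℕ} (hδ : 0 < δ) (hδp : δ ≤ p)
    (hratio : p < δ * (b - 1)) (g : Fin p → Fin b) :
    (univ.filter (fun f : Fin p → Fin b =>
        δ ≤ (univ.filter (fun k => f k = g k)).card)).card
      ≤ p * p.choose δ * (b - 1) ^ (p - δ) := by
  set S : Finset (Finset (Fin p)) := univ.filter (fun T => δ ≤ T.card) with hS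
  have hmaps : ∀ f ∈ univ.filter (fun f : Fin p → Fin b =>
      δ ≤ (univ.filter (fun k => f k = g k)).card),
      (univ.filter (fun k => f k = g k)) ∈ S := by
    intro f hf
    simp only [hS, mem_filter, mem_univ, true_and] at hf ⊢
    exact hf
  rw [Finset.card_eq_sum_card_fiberwise hmaps]
  have hfib : ∀ T ∈ S,
      ((univ.filter (fun f : Fin p → Fin b =>
          δ ≤ (univ.filter (fun k => f k = g k)).card)).filter
        (fun f => (univ.filter (fun k => f k = g k)) = T)).card
      ≤ (b - 1) ^ (p - T.card) := by
    intro T _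
    rw [← fiber_card g T]
    apply Finset.card_le_card
    intro f hf
    simp only [mem_filter, mem_univ, true_and] at hf ⊢
    intro k
    rw [← hf.2]
    simp
  calc ∑ T ∈ S, ((univ.filter (fun f : Fin p → Fin b =>
          δ ≤ (univ.filter (fun k => f k = g k)).card)).filter
        (fun f => (univ.filter (fun k => f k = g k)) = T)).card
      ≤ ∑ T ∈ S, (b - 1) ^ (p - T.card) := Finset.sum_le_sum hfib
    _ = ∑ j ∈ Finset.Icc δ p, ∑ T ∈ S.filter (fun T => T.card = j),
          (b - 1) ^ (p - T.card) := by
        rw [Finset.sum_fiberwise_of_maps_to]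
        intro T hT
        simp only [hS, mem_filter, mem_univ, true_and] at hT
        simp only [Finset.mem_Icc]
        exact ⟨hT, (Finset.card_le_univ T).trans_eq (by simp)⟩
    _ = ∑ j ∈ Finset.Icc δ p, p.choose j * (b - 1) ^ (p - j) := by
        apply Finset.sum_congr rfl
        intro j hj
        simp only [Finset.mem_Icc] at hj
        have heq : S.filter (fun T => T.card = j) = Finset.powersetCard j univ := by
          ext T
          simp only [hS, mem_filter, mem_univ, true_and,
            Finset.mem_powersetCard_univ]
          omega
        have : ∑ T ∈ S.filter (fun T => T.card = j), (b - 1) ^ (p - T.card)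
            = ∑ _T ∈ S.filter (fun T => T.card = j), (b - 1) ^ (p - j) := by
          apply Finset.sum_congr rfl
          intro T hT
          rw [mem_filter] at hT
          rw [hT.2]
        rw [this, Finset.sum_const, heq, Finset.card_powersetCard,
          Finset.card_univ, Fintype.card_fin, smul_eq_mul]
    _ ≤ ∑ _j ∈ Finset.Icc δ p, p.choose δ * (b - 1) ^ (p - δ) := by
        apply Finset.sum_le_sum
        intro j hj
        simp only [Finset.mem_Icc] at hj
        exact term_mono hratio j hj.1 hj.2
    _ = (p - δ + 1) * (p.choose δ * (b - 1) ^ (p - δ)) := by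
        rw [Finset.sum_const, Nat.card_Icc, smul_eq_mul]
        congr 1
        omega
    _ ≤ p * p.choose δ * (b - 1) ^ (p - δ) := by
        rw [mul_assoc]
        exact Nat.mul_le_mul_right _ (by omega)

/-- Greedy construction of separated codes: if
`(N-1)·p·C(p,δ)·(b-1)^{p-δ} < b^p` and `p < δ(b-1)`, then there exist `N` functions
`f_1, …, f_N : Fin p → Fin b` that pairwise agree in fewer than `δ` places. -/
theorem separated_code_exists
    (p b δ N : ℕ) (hp : 0 < p) (hb : 0 < b) (hδ : 0 < δ) (hδp : δ ≤ p) (hN : 0 < N)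
    (hcount : (N - 1) * (p * p.choose δ * (b - 1) ^ (p - δ)) < b ^ p)
    (hratio : p < δ * (b - 1)) :
    ∃ f : Fin N → (Fin p → Fin b), ∀ i j : Fin N, i ≠ j →
      (Finset.univ.filter (fun k => f i k = f j k)).card < δ := by
  have main : ∀ n, n ≤ N → ∃ f : Fin n → (Fin p → Fin b),
      ∀ i j : Fin n, i ≠ j →
        (Finset.univ.filter (fun k => f i k = f j k)).card < δ := by
    intro n
    induction n with
    | zero => exact fun _ => ⟨fun i => i.elim0, fun i => i.elim0⟩
    | succ n ih =>
      intro hn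
      obtain ⟨f, hf⟩ := ih (by omega)
      set Bad : (Fin p → Fin b) → Finset (Fin p → Fin b) := fun h =>
        univ.filter (fun g => δ ≤ (univ.filter (fun k => g k = h k)).card) with hBad
      have hcard : ((univ : Finset (Fin n)).biUnion (fun i => Bad (f i))).card
          < Fintype.card (Fin p → Fin b) := by
        have h1 : ((univ : Finset (Fin n)).biUnion (fun i => Bad (f i))).card
            ≤ ∑ i : Fin n, (Bad (f i)).card := Finset.card_biUnion_le
        have h2 : ∑ i : Fin n, (Bad (f i)).card
            ≤ ∑ _i : Fin n, p * p.choose δ * (b - 1) ^ (p - δ) :=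
          Finset.sum_le_sum (fun i _ => bad_card hδ hδp hratio (f i))
        have h3 : ∑ _i : Fin n, p * p.choose δ * (b - 1) ^ (p - δ)
            = n * (p * p.choose δ * (b - 1) ^ (p - δ)) := by
          rw [Finset.sum_const, Finset.card_univ, Fintype.card_fin, smul_eq_mul]
        have h4 : n * (p * p.choose δ * (b - 1) ^ (p - δ))
            ≤ (N - 1) * (p * p.choose δ * (b - 1) ^ (p - δ)) :=
          Nat.mul_le_mul_right _ (by omega)
        have h5 : Fintype.card (Fin p → Fin b) = b ^ p := by
          simp [Fintype.card_fun]
        omega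
      obtain ⟨g, hg⟩ : ∃ g : Fin p → Fin b,
          g ∉ (univ : Finset (Fin n)).biUnion (fun i => Bad (f i)) := by
        by_contra h
        push_neg at h
        have : (univ : Finset (Fin p → Fin b))
            ⊆ (univ : Finset (Fin n)).biUnion (fun i => Bad (f i)) :=
          fun x _ => h x
        have := Finset.card_le_card this
        rw [Finset.card_univ] at this
        omega
      have hgood : ∀ i : Fin n,
          (univ.filter (fun k => g k = f i k)).card < δ := by
        intro i
        by_contra hcon
        push_neg at hcon
        exact hg (Finset.mem_biUnion.2 ⟨i, Finset.mem_univ i,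
          by simp only [hBad, mem_filter, mem_univ, true_and]; exact hcon⟩)
      refine ⟨Fin.snoc f g, ?_⟩
      intro i j hij
      have hsym : ∀ u v : Fin p → Fin b,
          (univ.filter (fun k => u k = v k)) = (univ.filter (fun k => v k = u k)) := by
        intro u v
        apply Finset.filter_congr
        intro k _
        simp [eq_comm]
      induction i using Fin.lastCases with
      | last =>
        induction j using Fin.lastCases with
        | last => exact absurd rfl hij
        | cast j =>
          simp only [Fin.snoc_last, Fin.snoc_castSucc]
          exact hgood j
      | cast i =>
        induction j using Fin.lastCases with
        | last =>
          simp only [Fin.snoc_last, Fin.snoc_castSucc]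
          rw [hsym]
          exact hgood i
        | cast j =>
          simp only [Fin.snoc_castSucc]
          exact hf i j (fun h => hij (by rw [h]))
  exact main N le_rfl
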